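/- arXiv:1402.7258 — 3 statements merged into one kernel-verified Lean document; each statement's English description precedes it below -/
import Mathlib

section
/- Let X, Y be jointly Gaussian random vectors with Y = H X + N, where X ~ CN(0, I_{n_T}) and N ~ CN(0, N₀ I_{n_R}) independent. Then the conditional mutual information chain-rule telescoping holds with memory K: Σ_{k=1}^{n_T} I(Y; X_k | X_{k-1},...,X_{max(1,k-K)}) = log det(I + G/N₀) - Σ_{k=1}^{n_T-K} log det(I + G_{[k,k+K]}/N₀) + Σ_{k=2}^{n_T-K} log det(I + G_{[k,k+K-1]}/N₀), where G = H^H H and G_{[a,b]} = H̄_{[a,b]}^H H̄_{[a,b]} with H̄_{[a,b]} being H with columns a..b deleted. -/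
open Matrix

def colDel {nR nT : ℕ} (H : Matrix (Fin nR) (Fin nT) ℂ) (a b : ℕ) :
    Matrix (Fin nR) {j : Fin nT // j.val + 1 < a ∨ b < j.val + 1} ℂ :=
  H.submatrix id Subtype.val

def delCols {nR nT : ℕ} (H : Matrix (Fin nR) (Fin nT) ℂ) (A : Finset (Fin nT)) :
    Matrix (Fin nR) {j : Fin nT // j ∉ A} ℂ :=
  H.submatrix id Subtype.val

noncomputable def hYgiven {nR nT : ℕ} (H : Matrix (Fin nR) (Fin nT) ℂ) (N0 : ℝ)
    (A : Finset (Fin nT)) : ℝ :=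
  Real.log ((1 + (N0 : ℂ)⁻¹ • (delCols H A * (delCols H A)ᴴ)).det.re)

noncomputable def condMI {nR nT : ℕ} (H : Matrix (Fin nR) (Fin nT) ℂ) (N0 : ℝ)
    (k : Fin nT) (A : Finset (Fin nT)) : ℝ :=
  hYgiven H N0 A - hYgiven H N0 (insert k A)

noncomputable def gramDet {nR nT : ℕ} (H : Matrix (Fin nR) (Fin nT) ℂ) (c : ℂ)
    {ι : Type*} [Fintype ι] [DecidableEq ι] (f : ι → Fin nT) : ℝ :=
  (1 + c • ((H.submatrix id f)ᴴ * H.submatrix id f)).det.re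

lemma gramDet_reindex {nR nT : ℕ} (H : Matrix (Fin nR) (Fin nT) ℂ) (c : ℂ)
    {ι κ : Type*} [Fintype ι] [DecidableEq ι] [Fintype κ] [DecidableEq κ]
    (e : ι ≃ κ) (f : κ → Fin nT) :
    gramDet H c (f ∘ e) = gramDet H c f := by
  unfold gramDet
  congr 1
  have h : (1 + c • ((H.submatrix id (f ∘ ⇑e))ᴴ * H.submatrix id (f ∘ ⇑e)))
      = (1 + c • ((H.submatrix id f)ᴴ * H.submatrix id f)).submatrix e e := by
    ext i j
    simp [Matrix.submatrix_apply, Matrix.mul_apply, Matrix.one_apply,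
      Matrix.conjTranspose_apply, EmbeddingLike.apply_eq_iff_eq]
  rw [h, Matrix.det_submatrix_equiv_self]

lemma det_gram_comm {m n : Type*} [Fintype m] [Fintype n] [DecidableEq m] [DecidableEq n]
    (M : Matrix m n ℂ) (c : ℂ) :
    (1 + c • (M * Mᴴ)).det = (1 + c • (Mᴴ * M)).det := by
  rw [← Matrix.mul_smul, Matrix.det_one_add_mul_comm, Matrix.smul_mul]

lemma hYgiven_eq {nR nT : ℕ} (H : Matrix (Fin nR) (Fin nT) ℂ) (N0 : ℝ) (A : Finset (Fin nT)) :
    hYgiven H N0 A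
      = Real.log (gramDet H (N0 : ℂ)⁻¹ (Subtype.val : {j : Fin nT // j ∉ A} → Fin nT)) := by
  unfold hYgiven gramDet delCols
  rw [det_gram_comm]

lemma gram_pred_congr {nR nT : ℕ} (H : Matrix (Fin nR) (Fin nT) ℂ) (c : ℂ)
    (p : Fin nT → Prop) [DecidablePred p] (A : Finset (Fin nT)) (h : ∀ j, p j ↔ j ∉ A) :
    gramDet H c (Subtype.val : {j : Fin nT // p j} → Fin nT)
      = gramDet H c (Subtype.val : {j : Fin nT // j ∉ A} → Fin nT) := by
  have hf : (Subtype.val : {j : Fin nT // p j} → Fin nT)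
      = (Subtype.val : {j : Fin nT // j ∉ A} → Fin nT) ∘ (Equiv.subtypeEquivRight h) :=
    funext fun x => rfl
  rw [hf, gramDet_reindex]

lemma tele (g : ℕ → ℕ → ℝ) {nT K : ℕ} (hK : K < nT) :
    ∑ k ∈ Finset.range nT, (g (k - K) k - g (k - K) (k + 1))
      = g 0 0 - ∑ k ∈ Finset.Icc 1 (nT - K), g (k - 1) (k + K)
        + ∑ k ∈ Finset.Icc 2 (nT - K), g (k - 1) (k + K - 1) := by
  have h1 : ∑ k ∈ Finset.range K, (g (k - K) k - g (k - K) (k + 1)) = g 0 0 - g 0 K := by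
    rw [← Finset.sum_range_sub' (fun i => g 0 i) K]
    exact Finset.sum_congr rfl fun k hk => by
      have : k - K = 0 := by simp at hk; omega
      rw [this]
  rw [← Finset.sum_range_add_sum_Ico _ hK.le, h1, Finset.sum_Ico_eq_sum_range]
  have h2 : ∑ k ∈ Finset.range (nT - K), (g (K + k - K) (K + k) - g (K + k - K) (K + k + 1))
      = ∑ k ∈ Finset.range (nT - K), (g k (k + K) - g k (k + K + 1)) := by
    refine Finset.sum_congr rfl fun k hk => ?_
    have e1 : K + k - K = k := by omega
    have e2 : K + k = k + K := by omega
    rw [e1, e2]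
  rw [h2]
  have h3 : ∑ k ∈ Finset.Icc 1 (nT - K), g (k - 1) (k + K)
      = ∑ k ∈ Finset.range (nT - K), g k (k + K + 1) := by
    rw [show Finset.Icc 1 (nT - K) = Finset.Ico 1 (nT - K + 1) by rw [Finset.Ico_add_one_right_eq_Icc],
      Finset.sum_Ico_eq_sum_range]
    simp only [Nat.add_sub_cancel]
    exact Finset.sum_congr rfl fun k hk => by
      have e1 : 1 + k - 1 = k := by omega
      have e2 : 1 + k + K = k + K + 1 := by omega
      rw [e1, e2]
  have h4 : ∑ k ∈ Finset.Icc 2 (nT - K), g (k - 1) (k + K - 1)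
      = ∑ k ∈ Finset.range (nT - K - 1), g (k + 1) (k + 1 + K) := by
    rw [show Finset.Icc 2 (nT - K) = Finset.Ico 2 (nT - K + 1) by rw [Finset.Ico_add_one_right_eq_Icc],
      Finset.sum_Ico_eq_sum_range]
    rw [show nT - K + 1 - 2 = nT - K - 1 by omega]
    exact Finset.sum_congr rfl fun k hk => by
      have e1 : 2 + k - 1 = k + 1 := by omega
      have e2 : 2 + k + K - 1 = k + 1 + K := by omega
      rw [e1, e2]
  rw [h3, h4]
  have h5 : ∑ k ∈ Finset.range (nT - K), g k (k + K)
      = g 0 K + ∑ k ∈ Finset.range (nT - K - 1), g (k + 1) (k + 1 + K) := by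
    rw [show nT - K = (nT - K - 1) + 1 by omega, Finset.sum_range_succ' (fun k => g k (k + K))]
    simp only [Nat.zero_add, Nat.add_sub_cancel]
    ring
  rw [Finset.sum_sub_distrib, h5]
  ring

/-- Theorem 2 + Corollary 3 of the paper: for `Y = HX + N` with
`X ~ CN(0, I_{n_T})` and `N ~ CN(0, N₀ I_{n_R})` independent,
`Σ_{k=1}^{n_T} I(Y; X_k | X_{k-1},…,X_{max(1,k-K)})
 = log det(I+G/N₀) - Σ_{k=1}^{n_T-K} log det(I+G_{[k,k+K]}/N₀)
   + Σ_{k=2}^{n_T-K} log det(I+G_{[k,k+K-1]}/N₀)`,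
where `G = Hᴴ H` and `G_{[a,b]} = H̄_{[a,b]}ᴴ H̄_{[a,b]}`.
(The left-hand sum is indexed 0-based over `k : Fin n_T`; the conditioning set
`{j : k-K ≤ j < k}` is the 0-based version of `X_{k-1},…,X_{max(1,k-K)}`.) -/
theorem stmt6 (nR nT K : ℕ) (hK : K < nT)
    (H : Matrix (Fin nR) (Fin nT) ℂ) (N0 : ℝ) (hN0 : 0 < N0) :
    (∑ k : Fin nT, condMI H N0 k
        (Finset.univ.filter fun j : Fin nT => k.val - K ≤ j.val ∧ j.val < k.val)) =
      Real.log ((1 + (N0 : ℂ)⁻¹ • (Hᴴ * H)).det.re)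
        - ∑ k ∈ Finset.Icc 1 (nT - K),
            Real.log ((1 + (N0 : ℂ)⁻¹ • ((colDel H k (k + K))ᴴ * colDel H k (k + K))).det.re)
        + ∑ k ∈ Finset.Icc 2 (nT - K),
            Real.log ((1 + (N0 : ℂ)⁻¹ •
              ((colDel H k (k + K - 1))ᴴ * colDel H k (k + K - 1))).det.re) := by
  classical
  set g : ℕ → ℕ → ℝ := fun a b =>
    hYgiven H N0 (Finset.univ.filter fun j : Fin nT => a ≤ j.val ∧ j.val < b) with hg
  -- LHS
  have hL : (∑ k : Fin nT, condMI H N0 k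
        (Finset.univ.filter fun j : Fin nT => k.val - K ≤ j.val ∧ j.val < k.val))
      = ∑ k ∈ Finset.range nT, (g (k - K) k - g (k - K) (k + 1)) := by
    rw [← Fin.sum_univ_eq_sum_range (fun k => g (k - K) k - g (k - K) (k + 1)) nT]
    refine Finset.sum_congr rfl fun k _ => ?_
    unfold condMI
    congr 1
    congr 1
    ext j
    simp only [Finset.mem_insert, Finset.mem_filter, Finset.mem_univ, true_and, Fin.ext_iff]
    omega
  -- the G term
  have hG : Real.log ((1 + (N0 : ℂ)⁻¹ • (Hᴴ * H)).det.re) = g 0 0 := by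
    rw [hg]
    simp only
    rw [hYgiven_eq]
    have hall : ∀ j : Fin nT,
        j ∉ Finset.univ.filter fun j : Fin nT => 0 ≤ j.val ∧ j.val < 0 := by
      intro j; simp
    have hf : (Subtype.val :
        {j : Fin nT // j ∉ Finset.univ.filter fun j : Fin nT => 0 ≤ j.val ∧ j.val < 0} → Fin nT)
        = id ∘ (Equiv.subtypeUnivEquiv hall) := funext fun x => by
          simp [Equiv.subtypeUnivEquiv]
    rw [hf, gramDet_reindex]
    unfold gramDet
    rw [Matrix.submatrix_id_id]
  -- first Icc sum
  have hS1 : ∀ k ∈ Finset.Icc 1 (nT - K),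
      Real.log ((1 + (N0 : ℂ)⁻¹ • ((colDel H k (k + K))ᴴ * colDel H k (k + K))).det.re)
        = g (k - 1) (k + K) := by
    intro k hk
    have hk1 : 1 ≤ k := (Finset.mem_Icc.mp hk).1
    rw [hg]
    simp only
    rw [hYgiven_eq]
    have h : ∀ j : Fin nT, (j.val + 1 < k ∨ k + K < j.val + 1)
        ↔ j ∉ Finset.univ.filter fun j : Fin nT => k - 1 ≤ j.val ∧ j.val < k + K := by
      intro j
      simp only [Finset.mem_filter, Finset.mem_univ, true_and, not_and, not_lt]
      omega
    rw [← gram_pred_congr H (N0 : ℂ)⁻¹ _ _ h]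
    rfl
  -- second Icc sum
  have hS2 : ∀ k ∈ Finset.Icc 2 (nT - K),
      Real.log ((1 + (N0 : ℂ)⁻¹ •
          ((colDel H k (k + K - 1))ᴴ * colDel H k (k + K - 1))).det.re)
        = g (k - 1) (k + K - 1) := by
    intro k hk
    have hk1 : 2 ≤ k := (Finset.mem_Icc.mp hk).1
    rw [hg]
    simp only
    rw [hYgiven_eq]
    have h : ∀ j : Fin nT, (j.val + 1 < k ∨ k + K - 1 < j.val + 1)
        ↔ j ∉ Finset.univ.filter fun j : Fin nT => k - 1 ≤ j.val ∧ j.val < k + K - 1 := by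
      intro j
      simp only [Finset.mem_filter, Finset.mem_univ, true_and, not_and, not_lt]
      omega
    rw [← gram_pred_congr H (N0 : ℂ)⁻¹ _ _ h]
    rfl
  rw [hL, hG, Finset.sum_congr rfl hS1, Finset.sum_congr rfl hS2]
  exact tele g hK
end

section
/- Let C be an n×n positive definite Hermitian matrix and let U D U^H = R^{-1} be a UDU factorization where U is upper unit-triangular with bandwidth K (nonzero only on the main diagonal and first K superdiagonals) and D = diag(d_1,...,d_n) with d_k = det(C^{k-K}_{k-1})/det(C^{k-K}_k) for k > K. Then det(R^{-1}) = (1/det(C^1_K)) · Π_{k=K+1}^{n} det(C^{k-K}_{k-1})/det(C^{k-K}_k), where C^i_j is the principal submatrix of C on indices i..j (with det of empty matrix equal to 1 and d_1,...,d_K the diagonal of the D-factor in a UDL factorization of (C^1_K)^{-1}). -/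
open Matrix
open scoped ComplexOrder

/-- The principal submatrix of `C` on the `L` consecutive indices starting at `a`
(0-based); junk value `0` outside the valid range. -/
def psub {n : ℕ} (C : Matrix (Fin n) (Fin n) ℂ) (a L : ℕ) : Matrix (Fin L) (Fin L) ℂ :=
  fun i j =>
    if h : a + i.val < n ∧ a + j.val < n then C ⟨a + i.val, h.1⟩ ⟨a + j.val, h.2⟩ else 0

/-- let `C` be positive definite, `U` unit upper triangular with bandwidth
`K`, and `D = diag(d₁,…,dₙ)` with `d_k = det(C^{k-K}_{k-1})/det(C^{k-K}_k)` for `k > K`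
(1-based; here 0-based `K ≤ k`) and `Π_{k=1}^K d_k = 1/det(C¹_K)` (the diagonal of the
D-factor of a UDL factorization of `(C¹_K)⁻¹`).  Then for `R⁻¹ = U D Uᴴ`,
`det(R⁻¹) = (1/det(C¹_K)) Π_{k=K+1}^n det(C^{k-K}_{k-1})/det(C^{k-K}_k)`. -/
theorem stmt10 (n K : ℕ) (hK : K < n)
    (C U D : Matrix (Fin n) (Fin n) ℂ) (hC : C.PosDef)
    (d : Fin n → ℂ) (hD : D = Matrix.diagonal d)
    (hU1 : ∀ i : Fin n, U i i = 1)
    (hUlow : ∀ i j : Fin n, j.val < i.val → U i j = 0)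
    (hUband : ∀ i j : Fin n, i.val + K < j.val → U i j = 0)
    (hd : ∀ k : Fin n, K ≤ k.val →
      d k = (psub C (k.val - K) K).det / (psub C (k.val - K) (K + 1)).det)
    (hdprod : (∏ k ∈ Finset.univ.filter (fun k : Fin n => k.val < K), d k)
      = ((psub C 0 K).det)⁻¹) :
    (U * D * Uᴴ).det = ((psub C 0 K).det)⁻¹ *
      ∏ k ∈ Finset.univ.filter (fun k : Fin n => K ≤ k.val),
        (psub C (k.val - K) K).det / (psub C (k.val - K) (K + 1)).det := by
  have hUtri : U.det = 1 := by
    have := Matrix.det_of_upperTriangular (M := U)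
      (fun i j hij => hUlow i j hij)
    simp [this, hU1]
  have hdet : (U * D * Uᴴ).det = ∏ k, d k := by
    rw [Matrix.det_mul, Matrix.det_mul, Matrix.det_conjTranspose, hUtri, hD,
      Matrix.det_diagonal]
    simp
  rw [hdet]
  have hsplit : (∏ k, d k) =
      (∏ k ∈ Finset.univ.filter (fun k : Fin n => k.val < K), d k) *
      ∏ k ∈ Finset.univ.filter (fun k : Fin n => K ≤ k.val), d k := by
    rw [← Finset.prod_filter_mul_prod_filter_not Finset.univ (fun k : Fin n => k.val < K)]
    congr 1
    apply Finset.prod_congr _ (fun _ _ => rfl)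
    ext k
    simp [not_lt]
  rw [hsplit, hdprod]
  congr 1
  exact Finset.prod_congr rfl (fun k hk => hd k (by simpa using hk))
end

section
/- For integers n_R ≥ n_T ≥ 1, the high-SNR power offset difference between channel shortening with memory K (with n_R ≥ n_T, S_∞ = n_T) and full detection is L_∞^CS - L_∞^full = (1/n_T)[Σ_{ℓ=0}^{n_T-K-1} ψ(n_R - ℓ) - (n_T - K)·ψ(n_R - n_T + K + 1)], where ψ(j) = Σ_{k=1}^{j-1} 1/k - γ is the digamma function at positive integers, given that J(r, t) = log₂(e) Σ_{ℓ=0}^{t-1} ψ(r - ℓ) and L_∞^CS = log(n_T) - [J(n_R,n_T) - (n_T-K)J(n_R,n_T-K-1) + (n_T-K-1)J(n_R,n_T-K)]/n_T, L_∞^full = log(n_T) - J(n_R,n_T)/n_T. -/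
/-- high-SNR power-offset difference between channel shortening with memory
`K` and full detection, for `n_R ≥ n_T` (so `S_∞ = n_T`):
`L_∞^CS - L_∞^full = (1/n_T)[Σ_{ℓ=0}^{n_T-K-1} ψ(n_R-ℓ) - (n_T-K) ψ(n_R-n_T+K+1)]`,
where `ψ(j) = Σ_{k=1}^{j-1} 1/k - γ` is the digamma function at positive integers,
`J(r,t) = Σ_{ℓ=0}^{t-1} ψ(r-ℓ)` (the `log₂ e` normalization ignored consistently),
`L_∞^CS = log n_T - [J(n_R,n_T) - (n_T-K)J(n_R,n_T-K-1) + (n_T-K-1)J(n_R,n_T-K)]/n_T`,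
and `L_∞^full = log n_T - J(n_R,n_T)/n_T`. -/
theorem stmt17 (nT nR K : ℕ) (γ : ℝ) (h1 : nT ≤ nR) (h2 : K < nT) (h3 : 0 < nT)
    (ψ : ℕ → ℝ) (hψ : ∀ j, ψ j = (∑ k ∈ Finset.Icc 1 (j - 1), (1 : ℝ) / k) - γ)
    (J : ℕ → ℕ → ℝ) (hJ : ∀ r t, J r t = ∑ ℓ ∈ Finset.range t, ψ (r - ℓ))
    (Lcs Lfull : ℝ)
    (hLcs : Lcs = Real.log nT -
      (J nR nT - ((nT - K : ℕ) : ℝ) * J nR (nT - K - 1)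
        + ((nT - K - 1 : ℕ) : ℝ) * J nR (nT - K)) / nT)
    (hLfull : Lfull = Real.log nT - J nR nT / nT) :
    Lcs - Lfull = (1 / (nT : ℝ)) *
      ((∑ ℓ ∈ Finset.range (nT - K), ψ (nR - ℓ))
        - ((nT - K : ℕ) : ℝ) * ψ (nR - nT + K + 1)) := by
  subst hLcs hLfull
  have hm : nT - K = (nT - K - 1) + 1 := by omega
  have hx : nR - (nT - K - 1) = nR - nT + K + 1 := by omega
  have hsum := Finset.sum_range_succ (fun ℓ => ψ (nR - ℓ)) (nT - K - 1)
  rw [← hm, hx] at hsum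
  have hc : ((nT - K - 1 : ℕ) : ℝ) = ((nT - K : ℕ) : ℝ) - 1 := by
    rw [Nat.cast_sub (by omega : 1 ≤ nT - K), Nat.cast_one]
  have hnT : (nT : ℝ) ≠ 0 := by positivity
  rw [hJ nR (nT - K), hJ nR (nT - K - 1), hsum, hc]
  have hkey : ∀ x y : ℝ, (Real.log nT - x / nT) - (Real.log nT - y / nT) = (y - x) / nT := by
    intro x y; ring
  rw [hkey, one_div, inv_mul_eq_div]
  congr 1
  ring
end
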